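/- Let j ∈ ℕ, α = 1/(2j+1), and let n ≥ 0 be an integer. Then ∫_{−∞}^{∞} (H_n^α(x))² e^{−x^{2α}} |x|^{α−1} dx = 2^n n! √π / α. -/

import Mathlib

open MeasureTheory

/-- The physicists' Hermite polynomials, as real functions:
`H₀ = 1`, `H₁ x = 2 x`, `H_{m+1} x = 2 x * H_m x - 2 m * H_{m-1} x`. -/
noncomputable def hermiteP : ℕ → ℝ → ℝ
  | 0, _ => 1
  | 1, x => 2 * x
  | (m + 2), x => 2 * x * hermiteP (m + 1) x - 2 * ((m : ℝ) + 1) * hermiteP m x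

/-- The real `α`-th power for `α = 1/(2j+1)`, interpreted via the real odd root:
`sign x * |x| ^ α`. -/
noncomputable def oddRoot (α x : ℝ) : ℝ := Real.sign x * |x| ^ α

open Real Filter

lemma hermiteP_zero (x : ℝ) : hermiteP 0 x = 1 := rfl
lemma hermiteP_one (x : ℝ) : hermiteP 1 x = 2 * x := rfl
lemma hermiteP_succ (m : ℕ) (x : ℝ) :
    hermiteP (m + 2) x = 2 * x * hermiteP (m + 1) x - 2 * ((m : ℝ) + 1) * hermiteP m x := rfl

lemma hermiteP_neg : ∀ (n : ℕ) (x : ℝ), hermiteP n (-x) = (-1) ^ n * hermiteP n x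
  | 0, x => by simp [hermiteP_zero]
  | 1, x => by simp [hermiteP_one]
  | (m + 2), x => by
    rw [hermiteP_succ, hermiteP_succ, hermiteP_neg (m+1) x, hermiteP_neg m x]
    ring

lemma hermiteP_continuous : ∀ n : ℕ, Continuous (hermiteP n)
  | 0 => continuous_const
  | 1 => by
    rw [show hermiteP 1 = fun x : ℝ => 2 * x from funext hermiteP_one]
    exact continuous_const.mul continuous_id
  | (m + 2) => by
    have h1 := hermiteP_continuous (m+1)
    have h0 := hermiteP_continuous m
    have : Continuous fun x : ℝ => 2 * x * hermiteP (m + 1) x - 2 * ((m : ℝ) + 1) * hermiteP m x :=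
      ((continuous_const.mul continuous_id).mul h1).sub (continuous_const.mul h0)
    exact this.congr fun x => (hermiteP_succ m x).symm

lemma hermiteP_bound : ∀ n : ℕ, ∃ C : ℝ, 0 ≤ C ∧ ∀ x, |hermiteP n x| ≤ C * Real.exp (n * |x|)
  | 0 => ⟨1, zero_le_one, fun x => by simp [hermiteP_zero]⟩
  | 1 => ⟨2, by norm_num, fun x => by
      have hax : |x| ≤ Real.exp |x| := by have := Real.add_one_le_exp |x|; linarith
      rw [hermiteP_one, abs_mul, abs_two]
      simp only [Nat.cast_one, one_mul]
      nlinarith⟩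
  | (m + 2) => by
    obtain ⟨C1, hC1, h1⟩ := hermiteP_bound (m+1)
    obtain ⟨C0, hC0, h0⟩ := hermiteP_bound m
    refine ⟨2 * C1 + 2 * ((m:ℝ)+1) * C0, by positivity, fun x => ?_⟩
    have hx := abs_nonneg x
    have hax : |x| ≤ Real.exp |x| := by have := Real.add_one_le_exp |x|; linarith
    have e1 : Real.exp (((m:ℝ)+1) * |x|) * Real.exp |x| = Real.exp (((m+2:ℕ):ℝ) * |x|) := by
      rw [← Real.exp_add]; push_cast; ring_nf
    have e0 : Real.exp ((m : ℕ) * |x|) ≤ Real.exp (((m+2:ℕ):ℝ) * |x|) := by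
      apply Real.exp_le_exp.2; push_cast; nlinarith
    have A : |2*x*hermiteP (m+1) x| = 2 * |x| * |hermiteP (m+1) x| := by
      rw [abs_mul, abs_mul, abs_two]
    have B : |2*((m:ℝ)+1)*hermiteP m x| = 2*((m:ℝ)+1) * |hermiteP m x| := by
      rw [abs_mul]; congr 1
      rw [abs_of_nonneg]; positivity
    have b1 : |hermiteP (m+1) x| ≤ C1 * Real.exp (((m:ℝ)+1) * |x|) := by
      have := h1 x; push_cast at this ⊢; convert this using 3 <;> push_cast <;> ring
    have b0 : |hermiteP m x| ≤ C0 * Real.exp ((m:ℕ) * |x|) := h0 x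
    have t1 : 2 * |x| * |hermiteP (m+1) x| ≤ 2*C1*Real.exp (((m+2:ℕ):ℝ) * |x|) := by
      calc 2 * |x| * |hermiteP (m+1) x| ≤ 2 * |x| *(C1 * Real.exp (((m:ℝ)+1) * |x|)) := by
            gcongr
        _ = 2*C1*(|x| * Real.exp (((m:ℝ)+1) * |x|)) := by ring
        _ ≤ 2*C1*(Real.exp |x| * Real.exp (((m:ℝ)+1) * |x|)) := by gcongr
        _ = 2*C1*Real.exp (((m+2:ℕ):ℝ) * |x|) := by rw [mul_comm (Real.exp |x|), e1]
    have t0 : 2*((m:ℝ)+1) * |hermiteP m x| ≤ 2*((m:ℝ)+1)*C0*Real.exp (((m+2:ℕ):ℝ) * |x|) := by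
      calc 2*((m:ℝ)+1) * |hermiteP m x| ≤ 2*((m:ℝ)+1)*(C0 * Real.exp ((m:ℕ) * |x|)) := by
            gcongr
        _ ≤ 2*((m:ℝ)+1)*(C0 * Real.exp (((m+2:ℕ):ℝ) * |x|)) := by gcongr
        _ = _ := by ring
    calc |hermiteP (m+2) x|
        ≤ |2*x*hermiteP (m+1) x| + |2*((m:ℝ)+1)*hermiteP m x| := by
          rw [hermiteP_succ]; exact abs_sub _ _
      _ = 2 * |x| * |hermiteP (m+1) x| + 2*((m:ℝ)+1) * |hermiteP m x| := by rw [A, B]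
      _ ≤ (2 * C1 + 2 * ((m:ℝ)+1) * C0) * Real.exp (((m+2:ℕ):ℝ) * |x|) := by
          have := t1; have := t0; linarith

lemma hermiteP_hasDerivAt : ∀ (n : ℕ) (x : ℝ),
    HasDerivAt (hermiteP n) (2 * n * hermiteP (n - 1) x) x
  | 0, x => by
    rw [show hermiteP 0 = fun _ : ℝ => (1:ℝ) from funext hermiteP_zero]
    exact (hasDerivAt_const x (1:ℝ)).congr_deriv (by simp)
  | 1, x => by
    have h : HasDerivAt (fun y : ℝ => 2 * y) 2 x := by
      simpa using (hasDerivAt_id x).const_mul (2:ℝ)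
    have heq : hermiteP 1 = fun y : ℝ => 2 * y := funext fun y => hermiteP_one y
    rw [heq]
    simpa [hermiteP_zero, id] using (hasDerivAt_id x).const_mul (2:ℝ)
  | (m + 2), x => by
    have h1 := hermiteP_hasDerivAt (m+1) x
    have h0 := hermiteP_hasDerivAt m x
    have hfun : hermiteP (m+2) = fun y : ℝ =>
        2 * y * hermiteP (m + 1) y - 2 * ((m : ℝ) + 1) * hermiteP m y :=
      funext fun y => hermiteP_succ m y
    have hx : HasDerivAt (fun y : ℝ =>
        2 * y * hermiteP (m + 1) y - 2 * ((m : ℝ) + 1) * hermiteP m y)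
        ((2 * 1) * hermiteP (m+1) x + (2 * x) * (2 * (m+1 : ℕ) * hermiteP ((m+1) - 1) x)
          - 2 * ((m : ℝ) + 1) * (2 * m * hermiteP (m - 1) x)) x :=
      (((hasDerivAt_id x).const_mul 2).mul h1).sub (h0.const_mul _)
    rw [hfun]
    convert hx using 1
    simp only [Nat.add_sub_cancel]
    match m with
    | 0 => simp [hermiteP_zero, hermiteP_one]; ring
    | (k+1) =>
      have : hermiteP (k+2) x = 2 * x * hermiteP (k + 1) x - 2 * ((k : ℝ) + 1) * hermiteP k x :=
        hermiteP_succ k x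
      simp only [Nat.add_sub_cancel] at *
      push_cast
      rw [this]
      ring

lemma hermiteP_gauss_hasDerivAt (n : ℕ) (x : ℝ) :
    HasDerivAt (fun y : ℝ => hermiteP n y * Real.exp (-y^2))
      (-(hermiteP (n+1) x * Real.exp (-x^2))) x := by
  have hg : HasDerivAt (fun y : ℝ => Real.exp (-y^2)) (-(2*x) * Real.exp (-x^2)) x := by
    have h1 : HasDerivAt (fun y : ℝ => -y^2) (-(2*x)) x := by
      exact (hasDerivAt_pow 2 x).neg.congr_deriv (by norm_num)
    simpa [mul_comm] using h1.exp
  have h := (hermiteP_hasDerivAt n x).mul hg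
  refine h.congr_deriv ?_
  symm
  match n with
  | 0 => simp [hermiteP_zero, hermiteP_one]
  | (k+1) =>
    rw [hermiteP_succ k x]
    simp only [Nat.add_sub_cancel]
    push_cast
    ring

lemma HH_bound (a b : ℕ) : ∃ K : ℝ, 0 ≤ K ∧ ∀ x : ℝ,
    |hermiteP a x * hermiteP b x * Real.exp (-x^2)| ≤ K * Real.exp (-(1/2) * x^2) := by
  obtain ⟨Ca, hCa, ha⟩ := hermiteP_bound a
  obtain ⟨Cb, hCb, hb⟩ := hermiteP_bound b
  set m : ℝ := (a : ℝ) + b with hm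
  refine ⟨Ca * Cb * Real.exp (m^2/2), by positivity, fun x => ?_⟩
  have hx := abs_nonneg x
  have key : ((a:ℝ) * |x|) + ((b:ℝ) * |x|) + (-x^2) ≤ m^2/2 + (-(1/2) * x^2) := by
    have hxx : |x|^2 = x^2 := sq_abs x
    nlinarith [sq_nonneg (m - |x|)]
  calc |hermiteP a x * hermiteP b x * Real.exp (-x^2)|
      = |hermiteP a x| * |hermiteP b x| * Real.exp (-x^2) := by
        rw [abs_mul, abs_mul, abs_of_nonneg (Real.exp_pos _).le]
    _ ≤ (Ca * Real.exp (a * |x|)) * (Cb * Real.exp (b * |x|)) * Real.exp (-x^2) := by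
        have h1 := ha x
        have h2 := hb x
        gcongr <;> first | exact abs_nonneg _ | exact h1 | exact h2
    _ = Ca * Cb * Real.exp ((a:ℝ) * |x| + (b:ℝ) * |x| + (-x^2)) := by
        rw [Real.exp_add, Real.exp_add]; ring
    _ ≤ Ca * Cb * Real.exp (m^2/2 + (-(1/2) * x^2)) := by
        have : Real.exp ((a:ℝ) * |x| + (b:ℝ) * |x| + (-x^2)) ≤
            Real.exp (m^2/2 + (-(1/2) * x^2)) := Real.exp_le_exp.2 key
        exact mul_le_mul_of_nonneg_left this (mul_nonneg hCa hCb)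
    _ = Ca * Cb * Real.exp (m^2/2) * Real.exp (-(1/2) * x^2) := by
        rw [Real.exp_add]; ring

lemma integrable_HH (a b : ℕ) :
    Integrable (fun x : ℝ => hermiteP a x * hermiteP b x * Real.exp (-x^2)) := by
  obtain ⟨K, hK, hKb⟩ := HH_bound a b
  refine Integrable.mono' ((integrable_exp_neg_mul_sq (by norm_num : (0:ℝ) < 1/2)).const_mul K)
    ?_ ?_
  · exact (((hermiteP_continuous a).mul (hermiteP_continuous b)).mul
      (Real.continuous_exp.comp (continuous_pow 2).neg)).aestronglyMeasurable
  · filter_upwards with x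
    rw [Real.norm_eq_abs]
    exact hKb x

lemma tendsto_HH_zero_atTop (a b : ℕ) :
    Tendsto (fun x : ℝ => hermiteP a x * hermiteP b x * Real.exp (-x^2)) atTop (nhds 0) := by
  obtain ⟨K, hK, hKb⟩ := HH_bound a b
  have hb : ∀ x : ℝ, ‖hermiteP a x * hermiteP b x * Real.exp (-x^2)‖ ≤
      K * Real.exp (-(1/2) * x^2) := fun x => by rw [Real.norm_eq_abs]; exact hKb x
  have h2 : Tendsto (fun x : ℝ => x^2) atTop atTop := tendsto_pow_atTop two_ne_zero
  have h1 : Tendsto (fun x : ℝ => -(1/2) * x^2) atTop atBot :=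
    Tendsto.const_mul_atTop_of_neg (by norm_num : (-(1/2) : ℝ) < 0) h2
  have h0 : Tendsto (fun x : ℝ => K * Real.exp (-(1/2) * x^2)) atTop (nhds 0) := by
    have h3 : Tendsto (fun x : ℝ => Real.exp (-(1/2) * x^2)) atTop (nhds 0) :=
      Real.tendsto_exp_atBot.comp h1
    simpa [mul_zero] using h3.const_mul K
  exact squeeze_zero_norm hb h0

lemma tendsto_HH_zero_atBot (a b : ℕ) :
    Tendsto (fun x : ℝ => hermiteP a x * hermiteP b x * Real.exp (-x^2)) atBot (nhds 0) := by
  obtain ⟨K, hK, hKb⟩ := HH_bound a b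
  have hb : ∀ x : ℝ, ‖hermiteP a x * hermiteP b x * Real.exp (-x^2)‖ ≤
      K * Real.exp (-(1/2) * x^2) := fun x => by rw [Real.norm_eq_abs]; exact hKb x
  have h2 : Tendsto (fun x : ℝ => x^2) atBot atTop := by
    have hcomp : Tendsto (fun x : ℝ => |x| ^ 2) atBot atTop :=
      (tendsto_pow_atTop two_ne_zero).comp tendsto_abs_atBot_atTop
    exact hcomp.congr fun x => sq_abs x
  have h1 : Tendsto (fun x : ℝ => -(1/2) * x^2) atBot atBot :=
    Tendsto.const_mul_atTop_of_neg (by norm_num : (-(1/2) : ℝ) < 0) h2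
  have h0 : Tendsto (fun x : ℝ => K * Real.exp (-(1/2) * x^2)) atBot (nhds 0) := by
    have h3 : Tendsto (fun x : ℝ => Real.exp (-(1/2) * x^2)) atBot (nhds 0) :=
      Real.tendsto_exp_atBot.comp h1
    simpa [mul_zero] using h3.const_mul K
  exact squeeze_zero_norm hb h0

lemma hermiteP_neg_sq (n : ℕ) (t : ℝ) : hermiteP n (-t) ^ 2 = hermiteP n t ^ 2 := by
  rw [hermiteP_neg, mul_pow, ← pow_mul, mul_comm n 2, pow_mul]
  norm_num

lemma hermiteP_norm : ∀ n : ℕ, ∫ x : ℝ, hermiteP n x ^ 2 * Real.exp (-x^2)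
    = 2 ^ n * (Nat.factorial n : ℝ) * Real.sqrt Real.pi := by
  intro n
  induction n with
  | zero =>
    have h := integral_gaussian 1
    simp only [one_mul, neg_mul] at h
    simp only [hermiteP_zero, pow_zero, one_pow, one_mul, Nat.factorial_zero, Nat.cast_one]
    rw [h]
    norm_num
  | succ n ih =>
    set u : ℝ → ℝ := hermiteP (n+1) with hu_def
    set v : ℝ → ℝ := fun x => hermiteP n x * Real.exp (-x^2) with hv_def
    set u' : ℝ → ℝ := fun x => 2 * ((n:ℝ)+1) * hermiteP n x with hu'_def
    set v' : ℝ → ℝ := fun x => -(hermiteP (n+1) x * Real.exp (-x^2)) with hv'_def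
    have hu : ∀ x, HasDerivAt u (u' x) x := fun x => by
      show HasDerivAt (hermiteP (n+1)) (2 * ((n:ℝ)+1) * hermiteP n x) x
      simpa using hermiteP_hasDerivAt (n+1) x
    have hv : ∀ x, HasDerivAt v (v' x) x := fun x => hermiteP_gauss_hasDerivAt n x
    have e1 : u * v' = fun x => -(hermiteP (n+1) x * hermiteP (n+1) x * Real.exp (-x^2)) := by
      funext x; simp only [Pi.mul_apply, hu_def, hv'_def]; ring
    have e2 : u' * v = fun x => (2 * ((n:ℝ)+1)) *
        (hermiteP n x * hermiteP n x * Real.exp (-x^2)) := by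
      funext x; simp only [Pi.mul_apply, hu'_def, hv_def]; ring
    have e3 : u * v = fun x => hermiteP (n+1) x * hermiteP n x * Real.exp (-x^2) := by
      funext x; simp only [Pi.mul_apply, hu_def, hv_def]; ring
    have huv' : Integrable (u * v') := by
      rw [e1]; exact (integrable_HH (n+1) (n+1)).neg
    have hu'v : Integrable (u' * v) := by
      rw [e2]; exact (integrable_HH n n).const_mul _
    have h_bot : Filter.Tendsto (u * v) Filter.atBot (nhds 0) := by
      rw [e3]; exact tendsto_HH_zero_atBot (n+1) n
    have h_top : Filter.Tendsto (u * v) Filter.atTop (nhds 0) := by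
      rw [e3]; exact tendsto_HH_zero_atTop (n+1) n
    have key := integral_mul_deriv_eq_deriv_mul (fun x _ => hu x) (fun x _ => hv x) huv' hu'v h_bot h_top
    have L : ∫ x : ℝ, u x * v' x = - ∫ x : ℝ, hermiteP (n+1) x ^ 2 * Real.exp (-x^2) := by
      rw [← integral_neg]
      congr 1; funext x; simp only [hu_def, hv'_def]; ring
    have R : ∫ x : ℝ, u' x * v x
        = (2 * ((n:ℝ)+1)) * ∫ x : ℝ, hermiteP n x ^ 2 * Real.exp (-x^2) := by
      rw [← integral_const_mul]
      congr 1; funext x; simp only [hu'_def, hv_def]; ring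
    rw [L, R, ih] at key
    have : ∫ x : ℝ, hermiteP (n+1) x ^ 2 * Real.exp (-x^2)
        = (2 * ((n:ℝ)+1)) * (2 ^ n * (Nat.factorial n : ℝ) * Real.sqrt Real.pi) := by
      linarith [key]
    rw [this, Nat.factorial_succ]
    push_cast
    ring

theorem stmt_15 (j : ℕ) (α : ℝ) (hα : α = 1 / (2 * (j : ℝ) + 1)) (n : ℕ) :
    ∫ x : ℝ, (hermiteP n (oddRoot α x)) ^ 2 *
        Real.exp (-(|x| ^ (2 * α))) * |x| ^ (α - 1)
      = 2 ^ n * (Nat.factorial n : ℝ) * Real.sqrt Real.pi / α := by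
  have hαpos : 0 < α := by
    rw [hα]; positivity
  have hαne : α ≠ 0 := hαpos.ne'
  set G : ℝ → ℝ := fun u => hermiteP n u ^ 2 * Real.exp (-u^2) with hG
  set g : ℝ → ℝ := fun t => hermiteP n (t ^ α) ^ 2 * Real.exp (-(t ^ (2 * α))) * t ^ (α - 1)
    with hg
  -- step 1 : pointwise identification with g ∘ abs
  have hodd : ∀ x : ℝ, hermiteP n (oddRoot α x) ^ 2 = hermiteP n (|x| ^ α) ^ 2 := by
    intro x
    rcases lt_trichotomy x 0 with hx | hx | hx
    · rw [oddRoot, Real.sign_of_neg hx]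
      rw [show (-1 : ℝ) * |x| ^ α = -(|x| ^ α) by ring, hermiteP_neg_sq]
    · subst hx
      simp [oddRoot, Real.sign_zero, Real.zero_rpow hαne]
    · rw [oddRoot, Real.sign_of_pos hx, one_mul]
  have step1 : (∫ x : ℝ, (hermiteP n (oddRoot α x)) ^ 2 *
      Real.exp (-(|x| ^ (2 * α))) * |x| ^ (α - 1)) = ∫ x : ℝ, g |x| := by
    congr 1; funext x
    rw [hg]
    simp only [abs_abs]
    rw [hodd x]
  rw [step1, integral_comp_abs]
  -- step 2 : substitution u = x ^ α on (0, ∞)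
  have hsq : ∀ x : ℝ, 0 < x → x ^ (2 * α) = (x ^ α) ^ 2 := by
    intro x hx
    rw [mul_comm, Real.rpow_mul hx.le]
    norm_cast
  have step2 : (∫ t in Set.Ioi (0:ℝ), g t)
      = (1/α) * ∫ t in Set.Ioi (0:ℝ), (|α| * t ^ (α - 1)) • G (t ^ α) := by
    rw [← integral_const_mul]
    refine MeasureTheory.setIntegral_congr_fun measurableSet_Ioi (fun x hx => ?_)
    have hx' : (0:ℝ) < x := hx
    rw [hg, hG]
    simp only [smul_eq_mul, abs_of_pos hαpos]
    rw [hsq x hx']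
    field_simp
  rw [step2, MeasureTheory.integral_comp_rpow_Ioi G hαne]
  -- step 3 : full-line Gaussian-Hermite integral
  have habs : ∀ x : ℝ, G |x| = G x := by
    intro x
    rcases abs_choice x with h | h
    · rw [h]
    · rw [h]
      show hermiteP n (-x) ^ 2 * Real.exp (-(-x)^2) = hermiteP n x ^ 2 * Real.exp (-x^2)
      rw [hermiteP_neg_sq, neg_sq]
  have step3 : (∫ t in Set.Ioi (0:ℝ), G t) = (1/2) * ∫ x : ℝ, G x := by
    have := integral_comp_abs (f := G)
    have h2 : (∫ x : ℝ, G |x|) = ∫ x : ℝ, G x := by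
      congr 1; funext x; exact habs x
    rw [h2] at this
    linarith [this]
  rw [step3]
  have hnorm : (∫ x : ℝ, G x) = 2 ^ n * (Nat.factorial n : ℝ) * Real.sqrt Real.pi :=
    hermiteP_norm n
  rw [hnorm]
  field_simp
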